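/- Let U and V be independent real random variables with laws μ₁ and μ₂, and for each natural number k ≥ 1 let X_k be a random variable with the Beta(k,k) distribution on (0,1), independent of (U, V). Then the law of U·X_k + V·(1 - X_k) converges weakly as k → ∞ to the law of (U + V)/2. Equivalently, the pushforward of μ₁ ⋆_k μ₂ under the map x ↦ 2x converges weakly to the ordinary convolution μ₁ * μ₂. -/

import Mathlib

open MeasureTheory ProbabilityTheory Filter Topology Set

/-- The Beta function `B(a,b) = Γ(a)Γ(b)/Γ(a+b)`. -/
noncomputable def betaFun (a b : ℝ) : ℝ := Real.Gamma a * Real.Gamma b / Real.Gamma (a + b)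

/-- The Beta(a,b) distribution on (0,1), with density `x^(a-1)(1-x)^(b-1)/B(a,b)`
on `(0,1)` and zero elsewhere. -/
noncomputable def betaMeasure (a b : ℝ) : Measure ℝ :=
  MeasureTheory.volume.withDensity fun x =>
    ENNReal.ofReal (if x ∈ Set.Ioo (0 : ℝ) 1 then
      x ^ (a - 1) * (1 - x) ^ (b - 1) / betaFun a b else 0)

/-- The modified Stieltjes transform `R_γ(u; μ) = ∫ (1 - i u x)^(-γ) dμ(x)`
(principal branch of the complex power). -/
noncomputable def stieltjesR (γ : ℝ) (μ : Measure ℝ) (u : ℝ) : ℂ :=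
  ∫ x, (1 - (u * x : ℝ) * Complex.I) ^ (-(γ : ℂ)) ∂μ

/-- The rising factorial (Pochhammer symbol) `(s)_j = s(s+1)⋯(s+j-1)`, `(s)_0 = 1`. -/
noncomputable def risingFac (s : ℝ) (j : ℕ) : ℝ := ∏ i ∈ Finset.range j, (s + i)

/-- The `β̃_{A,B}(α,β)` distribution on `(A,B)`, with density
`(x-A)^(α-1)(B-x)^(β-1)/(B(α,β)(B-A)^(α+β-1))` on `(A,B)` and zero elsewhere. -/
noncomputable def tildeBetaMeasure (A B α β : ℝ) : Measure ℝ :=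
  MeasureTheory.volume.withDensity fun x =>
    ENNReal.ofReal (if x ∈ Set.Ioo A B then
      (x - A) ^ (α - 1) * (B - x) ^ (β - 1) / (betaFun α β * (B - A) ^ (α + β - 1)) else 0)

/-- The generalized convolution `μ₁ ⋆_n μ₂`: the law of `U·X + V·(1-X)` where `U, V, X`
are independent with laws `μ₁`, `μ₂` and Beta(n,n) respectively. -/
noncomputable def genConv (n : ℝ) (μ₁ μ₂ : Measure ℝ) : Measure ℝ :=
  Measure.map (fun p : ℝ × ℝ × ℝ => p.1 * p.2.2 + p.2.1 * (1 - p.2.2))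
    (μ₁.prod (μ₂.prod (_root_.betaMeasure n n)))

open scoped ENNReal NNReal

lemma betaFun_pos {a b : ℝ} (ha : 0 < a) (hb : 0 < b) : 0 < betaFun a b := by
  unfold betaFun
  exact div_pos (mul_pos (Real.Gamma_pos_of_pos ha) (Real.Gamma_pos_of_pos hb))
    (Real.Gamma_pos_of_pos (by linarith))

lemma measurableSet_tail (c : ℝ) : MeasurableSet {x : ℝ | c ≤ |x - 1/2|} :=
  measurableSet_le measurable_const ((measurable_id.sub_const _).abs)

lemma betaMeasure_tail (k : ℕ) (hk : 1 ≤ k) (hprob : (_root_.betaMeasure k k) Set.univ = 1)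
    {η : ℝ} (hη0 : 0 < η) (hη : η ≤ 1/4) :
    _root_.betaMeasure k k {x | η ≤ |x - 1/2|} ≤
      ENNReal.ofReal ((1/η) * ((1/4 - η^2)/(1/4 - η^2/4))^(k-1)) := by
  set m := k - 1 with hm
  set a : ℝ := 1/4 - η^2 with ha
  set b : ℝ := 1/4 - η^2/4 with hb
  have ha0 : 0 < a := by rw [ha]; nlinarith
  have hb0 : 0 < b := by rw [hb]; nlinarith
  set c : ℝ := (betaFun k k)⁻¹ with hc
  have hkR : (0:ℝ) < k := by exact_mod_cast Nat.lt_of_lt_of_le Nat.zero_lt_one hk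
  have hc0 : 0 < c := by
    rw [hc]; exact inv_pos.mpr (betaFun_pos hkR hkR)
  have hcast : (k:ℝ) - 1 = (m : ℝ) := by
    rw [hm, Nat.cast_sub hk]; norm_num
  set d : ℝ → ℝ≥0∞ := fun x => ENNReal.ofReal (if x ∈ Set.Ioo (0:ℝ) 1 then
      x ^ ((k:ℝ) - 1) * (1 - x) ^ ((k:ℝ) - 1) / betaFun k k else 0) with hd
  have hdmeas : Measurable d := by
    apply Measurable.ennreal_ofReal
    refine Measurable.ite measurableSet_Ioo ?_ measurable_const
    fun_prop
  have hdens : ∀ x ∈ Ioo (0:ℝ) 1,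
      x ^ ((k:ℝ) - 1) * (1 - x) ^ ((k:ℝ) - 1) / betaFun k k = (x*(1-x))^m * c := by
    intro x hx
    rw [hcast, Real.rpow_natCast, Real.rpow_natCast, div_eq_mul_inv, ← hc, ← mul_pow]
  -- normalization: lower bound on the middle interval gives upper bound on c
  have hmid : (_root_.betaMeasure k k) (Icc (1/2 - η/2) (1/2 + η/2)) ≥
      ENNReal.ofReal (b ^ m * c) * ENNReal.ofReal η := by
    have hTsub : Icc (1/2 - η/2) (1/2 + η/2) ⊆ Ioo (0:ℝ) 1 := by
      intro x hx; simp only [mem_Icc] at hx; constructor <;> nlinarith [hx.1, hx.2]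
    have hTption : ∀ x ∈ Icc (1/2 - η/2) (1/2 + η/2), ENNReal.ofReal (b ^ m * c) ≤ d x := by
      intro x hx
      have hx01 := hTsub hx
      rw [hd]
      simp only [hx01, if_pos, hdens x hx01]
      apply ENNReal.ofReal_le_ofReal
      have hxb : b ≤ x * (1 - x) := by
        simp only [mem_Icc] at hx
        rw [hb]
        nlinarith [mul_nonneg (sub_nonneg.mpr hx.1) (sub_nonneg.mpr hx.2)]
      exact mul_le_mul_of_nonneg_right (pow_le_pow_left₀ hb0.le hxb m) hc0.le
    calc ENNReal.ofReal (b ^ m * c) * ENNReal.ofReal η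
        = ∫⁻ _ in Icc (1/2 - η/2) (1/2 + η/2), ENNReal.ofReal (b ^ m * c) ∂volume := by
          rw [setLIntegral_const, Real.volume_Icc]
          congr 1
          rw [show 1/2 + η/2 - (1/2 - η/2) = η by ring]
      _ ≤ ∫⁻ x in Icc (1/2 - η/2) (1/2 + η/2), d x ∂volume :=
          setLIntegral_mono hdmeas hTption
      _ = (_root_.betaMeasure k k) (Icc (1/2 - η/2) (1/2 + η/2)) := by
          rw [_root_.betaMeasure, withDensity_apply _ measurableSet_Icc]
  have hcb : c * b ^ m * η ≤ 1 := by
    by_contra hcon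
    push_neg at hcon
    have h1 : ENNReal.ofReal (b ^ m * c) * ENNReal.ofReal η ≤ 1 := by
      refine le_trans hmid ?_
      rw [← hprob]; exact measure_mono (subset_univ _)
    rw [← ENNReal.ofReal_mul (by positivity), ← ENNReal.ofReal_one] at h1
    have := ENNReal.ofReal_le_ofReal_iff (by norm_num) |>.mp h1
    nlinarith [pow_pos hb0 m]
  -- upper bound on the tail
  have htail : (_root_.betaMeasure k k) {x | η ≤ |x - 1/2|} ≤ ENNReal.ofReal (a ^ m * c) := by
    rw [_root_.betaMeasure, withDensity_apply _ (measurableSet_tail η)]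
    calc ∫⁻ x in {x | η ≤ |x - 1/2|}, d x ∂volume
        ≤ ∫⁻ x in {x | η ≤ |x - 1/2|},
            (Ioo (0:ℝ) 1).indicator (fun _ => ENNReal.ofReal (a ^ m * c)) x ∂volume := by
          refine setLIntegral_mono (measurable_const.indicator measurableSet_Ioo) ?_
          intro x hx
          rw [hd]
          by_cases hx01 : x ∈ Ioo (0:ℝ) 1
          · simp only [hx01, if_pos, hdens x hx01, indicator_of_mem hx01]
            apply ENNReal.ofReal_le_ofReal
            have hxa : x * (1 - x) ≤ a := by
              have h2 : η^2 ≤ (x - 1/2)^2 := by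
                have := pow_le_pow_left₀ hη0.le hx 2
                rwa [sq_abs] at this
              rw [ha]; nlinarith [h2]
            have hxnn : 0 ≤ x * (1 - x) := by
              nlinarith [hx01.1, hx01.2]
            exact mul_le_mul_of_nonneg_right (pow_le_pow_left₀ hxnn hxa m) hc0.le
          · simp [hx01]
      _ = ENNReal.ofReal (a ^ m * c) * volume (Ioo (0:ℝ) 1 ∩ {x | η ≤ |x - 1/2|}) := by
          rw [lintegral_indicator measurableSet_Ioo, setLIntegral_const,
            Measure.restrict_apply measurableSet_Ioo]
      _ ≤ ENNReal.ofReal (a ^ m * c) * 1 := by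
          gcongr
          refine le_trans (measure_mono inter_subset_left) ?_
          rw [Real.volume_Ioo]; simp
      _ = ENNReal.ofReal (a ^ m * c) := mul_one _
  refine le_trans htail (ENNReal.ofReal_le_ofReal ?_)
  have hcle : c ≤ 1 / (η * b ^ m) := by
    rw [le_div_iff₀ (by positivity)]
    nlinarith [hcb]
  calc a ^ m * c ≤ a ^ m * (1 / (η * b ^ m)) := by
        exact mul_le_mul_of_nonneg_left hcle (by positivity)
    _ = (1/η) * (a/b)^m := by
        rw [div_pow]; field_simp

lemma betaMeasure_concentrate (hprob : ∀ k : ℕ, 1 ≤ k → (_root_.betaMeasure k k) Set.univ = 1)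
    {ε : ℝ} (hε : 0 < ε) :
    Tendsto (fun k : ℕ => _root_.betaMeasure k k {x | ε ≤ |x - 1/2|}) atTop (𝓝 0) := by
  set η := min ε (1/4) with hη
  have hη0 : 0 < η := lt_min hε (by norm_num)
  have hη4 : η ≤ 1/4 := min_le_right _ _
  set r := (1/4 - η^2)/(1/4 - η^2/4) with hr
  have hb0 : (0:ℝ) < 1/4 - η^2/4 := by nlinarith
  have hr0 : 0 ≤ r := by
    apply div_nonneg _ hb0.le; nlinarith
  have hr1 : r < 1 := by
    rw [hr, div_lt_one hb0]; nlinarith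
  have hupper : Tendsto (fun k : ℕ => ENNReal.ofReal ((1/η) * r^(k-1))) atTop (𝓝 0) := by
    rw [← ENNReal.ofReal_zero]
    apply ENNReal.tendsto_ofReal
    have h1 : Tendsto (fun n : ℕ => r ^ n) atTop (𝓝 0) :=
      tendsto_pow_atTop_nhds_zero_of_lt_one hr0 hr1
    have h2 : Tendsto (fun k : ℕ => k - 1) atTop atTop := tendsto_sub_atTop_nat 1
    have h3 := (h1.comp h2).const_mul (1/η)
    simpa using h3
  refine tendsto_of_tendsto_of_tendsto_of_le_of_le' tendsto_const_nhds hupper ?_ ?_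
  · exact Eventually.of_forall fun k => zero_le
  · filter_upwards [eventually_ge_atTop 1] with k hk
    refine le_trans (measure_mono ?_) (betaMeasure_tail k hk (hprob k hk) hη0 hη4)
    intro x hx
    simp only [mem_setOf_eq] at hx ⊢
    exact le_trans (min_le_left _ _) hx

/-- With `U, V` independent of laws `μ₁, μ₂` and `X k ~ Beta(k,k)` independent of `(U,V)`,
the law of `U·X_k + V·(1-X_k)` converges weakly to the law of `(U+V)/2` as `k → ∞`;
equivalently, the pushforward of `μ₁ ⋆_k μ₂` under `x ↦ 2x` converges weakly to the
ordinary convolution `μ₁ ∗ μ₂`. -/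
theorem genConv_tendsto_ordinary_convolution
    {Ω : Type*} [MeasureSpace Ω] [IsProbabilityMeasure (ℙ : Measure Ω)]
    (U V : Ω → ℝ) (X : ℕ → Ω → ℝ)
    (hU : Measurable U) (hV : Measurable V) (hX : ∀ k, Measurable (X k))
    (μ₁ μ₂ : Measure ℝ)
    (hUlaw : Measure.map U ℙ = μ₁) (hVlaw : Measure.map V ℙ = μ₂)
    (hUV : IndepFun U V ℙ)
    (hXindep : ∀ k, 1 ≤ k → IndepFun (fun ω => (U ω, V ω)) (X k) ℙ)
    (hXlaw : ∀ k, 1 ≤ k → Measure.map (X k) ℙ = _root_.betaMeasure k k) :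
    (∀ f : BoundedContinuousFunction ℝ ℝ,
        Tendsto (fun k : ℕ => ∫ ω, f (U ω * X k ω + V ω * (1 - X k ω)) ∂ℙ)
          atTop (𝓝 (∫ ω, f ((U ω + V ω) / 2) ∂ℙ))) ∧
      ∀ f : BoundedContinuousFunction ℝ ℝ,
        Tendsto (fun k : ℕ => ∫ x, f x ∂(Measure.map (fun x => 2 * x) (genConv k μ₁ μ₂)))
          atTop (𝓝 (∫ x, f x ∂(μ₁.conv μ₂))) := by
  subst hUlaw hVlaw
  haveI hμ₁ : IsProbabilityMeasure (Measure.map U ℙ) := Measure.isProbabilityMeasure_map hU.aemeasurable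
  haveI hμ₂ : IsProbabilityMeasure (Measure.map V ℙ) := Measure.isProbabilityMeasure_map hV.aemeasurable
  -- beta measures are probability measures
  have hprob_beta : ∀ k : ℕ, 1 ≤ k → (_root_.betaMeasure k k) Set.univ = 1 := by
    intro k hk
    rw [← hXlaw k hk, Measure.map_apply (hX k) MeasurableSet.univ]
    simp
  -- concentration of X k at 1/2, in ℙ
  have hconcP : ∀ ε : ℝ, 0 < ε →
      Tendsto (fun k : ℕ => ℙ {ω | ε ≤ |X k ω - 1/2|}) atTop (𝓝 0) := by
    intro ε hε
    refine Tendsto.congr' ?_ (betaMeasure_concentrate hprob_beta hε)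
    filter_upwards [eventually_ge_atTop 1] with k hk
    rw [← hXlaw k hk, Measure.map_apply (hX k) (measurableSet_tail ε)]
    rfl
  -- convergence in measure
  have hTIM : TendstoInMeasure ℙ (fun k ω => U ω * X k ω + V ω * (1 - X k ω)) atTop
      (fun ω => (U ω + V ω) / 2) := by
    rw [tendstoInMeasure_iff_dist]
    intro ε hε
    rw [ENNReal.tendsto_nhds_zero]
    intro δ hδ
    obtain ⟨M, hM1, hMbound⟩ : ∃ M : ℕ, 1 ≤ M ∧ ℙ {ω | (M:ℝ) ≤ |U ω - V ω|} ≤ δ / 2 := by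
      have hiinter : ⋂ n : ℕ, {ω | (n:ℝ) ≤ |U ω - V ω|} = ∅ := by
        ext ω
        simp only [mem_iInter, mem_setOf_eq, mem_empty_iff_false, iff_false, not_forall, not_le]
        exact exists_nat_gt |U ω - V ω|
      have hmeas : ∀ n : ℕ, NullMeasurableSet {ω | (n:ℝ) ≤ |U ω - V ω|} ℙ := fun n =>
        (measurableSet_le measurable_const ((hU.sub hV).abs)).nullMeasurableSet
      have hanti : Antitone fun n : ℕ => {ω | (n:ℝ) ≤ |U ω - V ω|} := by
        intro i j hij ω hω
        simp only [mem_setOf_eq] at hω ⊢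
        exact le_trans (by exact_mod_cast hij) hω
      have htend := tendsto_measure_iInter_atTop hmeas hanti ⟨0, measure_ne_top _ _⟩
      rw [hiinter, measure_empty, ENNReal.tendsto_nhds_zero] at htend
      obtain ⟨M, hM⟩ := ((htend (δ / 2) (ENNReal.half_pos hδ.ne')).and
        (eventually_ge_atTop 1)).exists
      exact ⟨M, hM.2, hM.1⟩
    have hM0 : (0:ℝ) < M := by exact_mod_cast hM1
    have hconc := hconcP (ε / M) (div_pos hε hM0)
    rw [ENNReal.tendsto_nhds_zero] at hconc
    filter_upwards [hconc (δ / 2) (ENNReal.half_pos hδ.ne')] with k hk2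
    have hsub : {ω | ε ≤ dist (U ω * X k ω + V ω * (1 - X k ω)) ((U ω + V ω) / 2)} ⊆
        {ω | (M:ℝ) ≤ |U ω - V ω|} ∪ {ω | ε / M ≤ |X k ω - 1/2|} := by
      intro ω hω
      simp only [mem_setOf_eq] at hω
      rw [mem_union]
      by_contra hcon
      push_neg at hcon
      simp only [mem_setOf_eq, not_le] at hcon
      obtain ⟨h1, h2⟩ := hcon
      have hdist : dist (U ω * X k ω + V ω * (1 - X k ω)) ((U ω + V ω) / 2)
          = |U ω - V ω| * |X k ω - 1/2| := by
        rw [Real.dist_eq, ← abs_mul]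
        congr 1
        ring
      rw [hdist] at hω
      have : |U ω - V ω| * |X k ω - 1/2| < ε := by
        calc |U ω - V ω| * |X k ω - 1/2| ≤ (M:ℝ) * |X k ω - 1/2| :=
              mul_le_mul_of_nonneg_right h1.le (abs_nonneg _)
          _ < (M:ℝ) * (ε / M) := by
              exact mul_lt_mul_of_pos_left h2 hM0
          _ = ε := by field_simp
      linarith
    calc ℙ {ω | ε ≤ dist (U ω * X k ω + V ω * (1 - X k ω)) ((U ω + V ω) / 2)}
        ≤ ℙ ({ω | (M:ℝ) ≤ |U ω - V ω|} ∪ {ω | ε / M ≤ |X k ω - 1/2|}) := measure_mono hsub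
      _ ≤ ℙ {ω | (M:ℝ) ≤ |U ω - V ω|} + ℙ {ω | ε / M ≤ |X k ω - 1/2|} := measure_union_le _ _
      _ ≤ δ / 2 + δ / 2 := add_le_add hMbound hk2
      _ = δ := ENNReal.add_halves δ
  -- part 1
  have hYmeas : ∀ k, Measurable fun ω => U ω * X k ω + V ω * (1 - X k ω) := fun k =>
    (hU.mul (hX k)).add (hV.mul (measurable_const.sub (hX k)))
  have hpart1 : ∀ f : BoundedContinuousFunction ℝ ℝ,
      Tendsto (fun k : ℕ => ∫ ω, f (U ω * X k ω + V ω * (1 - X k ω)) ∂ℙ)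
        atTop (𝓝 (∫ ω, f ((U ω + V ω) / 2) ∂ℙ)) := by
    intro f
    apply tendsto_of_subseq_tendsto
    intro ns hns
    have hTIM' : TendstoInMeasure ℙ (fun n ω => U ω * X (ns n) ω + V ω * (1 - X (ns n) ω))
        atTop (fun ω => (U ω + V ω) / 2) := fun ε hε => (hTIM ε hε).comp hns
    obtain ⟨ms, -, hae⟩ := hTIM'.exists_seq_tendsto_ae
    refine ⟨ms, ?_⟩
    apply tendsto_integral_of_dominated_convergence (fun _ => ‖f‖)
    · exact fun n => (f.continuous.measurable.comp (hYmeas (ns (ms n)))).aestronglyMeasurable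
    · exact integrable_const _
    · exact fun n => Eventually.of_forall fun ω => f.norm_coe_le_norm _
    · filter_upwards [hae] with ω hω
      exact (f.continuous.tendsto _).comp hω
  refine ⟨hpart1, ?_⟩
  -- part 2
  have hpair : Measure.map (fun ω => (U ω, V ω)) ℙ = (Measure.map U ℙ).prod (Measure.map V ℙ) :=
    (indepFun_iff_map_prod_eq_prod_map_map hU.aemeasurable hV.aemeasurable).mp hUV
  have hkey : ∀ k : ℕ, 1 ≤ k →
      Measure.map (fun x => 2 * x) (genConv k (Measure.map U ℙ) (Measure.map V ℙ)) =
        Measure.map (fun ω => 2 * (U ω * X k ω + V ω * (1 - X k ω))) ℙ := by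
    intro k hk
    haveI instβ : IsProbabilityMeasure (_root_.betaMeasure (k:ℝ) (k:ℝ)) :=
      hXlaw k hk ▸ Measure.isProbabilityMeasure_map (hX k).aemeasurable
    have htr : Measure.map (fun ω => ((U ω, V ω), X k ω)) ℙ =
        ((Measure.map U ℙ).prod (Measure.map V ℙ)).prod (_root_.betaMeasure k k) := by
      rw [← hpair, ← hXlaw k hk]
      exact (indepFun_iff_map_prod_eq_prod_map_map (hU.prodMk hV).aemeasurable
        (hX k).aemeasurable).mp (hXindep k hk)
    have htriple : Measure.map (fun ω => (U ω, V ω, X k ω)) ℙ =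
        (Measure.map U ℙ).prod ((Measure.map V ℙ).prod (_root_.betaMeasure k k)) := by
      rw [← Measure.prodAssoc_prod, ← htr,
        Measure.map_map MeasurableEquiv.prodAssoc.measurable ((hU.prodMk hV).prodMk (hX k))]
      rfl
    rw [genConv, ← htriple,
      Measure.map_map (by fun_prop) (hU.prodMk (hV.prodMk (hX k))),
      Measure.map_map (by fun_prop) (by fun_prop)]
    rfl
  have hconv : (Measure.map U ℙ).conv (Measure.map V ℙ) =
      Measure.map (fun ω => U ω + V ω) ℙ := by
    rw [Measure.conv, ← hpair,
      Measure.map_map (g := fun x : ℝ × ℝ => x.1 + x.2) (measurable_fst.add measurable_snd) (hU.prodMk hV)]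
    rfl
  intro f
  have hg : Continuous fun x : ℝ => 2 * x := by continuity
  have h2g := hpart1 (f.compContinuous ⟨fun x => 2 * x, hg⟩)
  simp only [BoundedContinuousFunction.coe_compContinuous, ContinuousMap.coe_mk,
    Function.comp_apply] at h2g
  have hlim : ∫ ω, f (2 * ((U ω + V ω) / 2)) ∂ℙ = ∫ x, f x ∂((Measure.map U ℙ).conv (Measure.map V ℙ)) := by
    rw [hconv, integral_map (φ := fun ω => U ω + V ω) (hU.add hV).aemeasurable f.continuous.aestronglyMeasurable]
    congr 1
    ext ω
    congr 1
    ring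
  rw [hlim] at h2g
  refine Tendsto.congr' ?_ h2g
  filter_upwards [eventually_ge_atTop 1] with k hk
  rw [hkey k hk, integral_map (φ := fun ω => 2 * (U ω * X k ω + V ω * (1 - X k ω))) ((measurable_const.mul (hYmeas k))).aemeasurable
    f.continuous.aestronglyMeasurable]
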